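/- (Multiplicative Riemann–Hilbert factorization via Sokhotskyi–Plemelj integrals.) Let f : ℝ → ℂ be integrable and let ω₀ ∈ ℝ be a point at which f satisfies a Hölder condition: there exist C > 0 and γ ∈ (0, 1] with |f(x) − f(ω₀)| ≤ C|x − ω₀|^γ for all x with |x − ω₀| ≤ 1. Define Φ⁺(λ) = exp(φ_f(λ)) for Im λ > 0 and Φ⁻(λ) = exp(−φ_f(λ)) for Im λ < 0. Then lim_{y→0⁺} Φ⁺(ω₀ + iy) · Φ⁻(ω₀ − iy) = e^{f(ω₀)}. In particular, if f = ln g for a continuous non-vanishing function g, the radial limits of Φ⁺ and Φ⁻ solve the homogeneous Riemann–Hilbert problem Φ⁺(ω)Φ⁻(ω) = g(ω) at ω = ω₀. -/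

import Mathlib

open MeasureTheory Complex Real Filter Topology

/-- The Sokhotskyi–Plemelj (Cauchy) integral of an integrable function
`f : ℝ → ℂ`. -/
noncomputable def sokhotskyiPlemelj (f : ℝ → ℂ) (lam : ℂ) : ℂ :=
  (1 / (2 * (π : ℂ) * Complex.I)) * ∫ x : ℝ, f x / ((x : ℂ) - lam)


lemma poisson_integrable {y : ℝ} (hy : 0 < y) (ω₀ : ℝ) :
    Integrable (fun x : ℝ => y / ((x - ω₀) ^ 2 + y ^ 2)) := by
  have h : ∀ x : ℝ, y / ((x - ω₀) ^ 2 + y ^ 2)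
      = y⁻¹ * (1 + ((x - ω₀) / y) ^ 2)⁻¹ := by
    intro x
    have hy' : y ≠ 0 := ne_of_gt hy
    field_simp
    ring
  simp_rw [h]
  exact ((integrable_inv_one_add_sq.comp_div hy.ne').comp_sub_right ω₀).const_mul _

lemma poisson_integral {y : ℝ} (hy : 0 < y) (ω₀ : ℝ) :
    ∫ x : ℝ, y / ((x - ω₀) ^ 2 + y ^ 2) = π := by
  have h : ∀ x : ℝ, y / ((x - ω₀) ^ 2 + y ^ 2)
      = y⁻¹ * (1 + ((x - ω₀) / y) ^ 2)⁻¹ := by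
    intro x
    have hy' : y ≠ 0 := ne_of_gt hy
    field_simp
    ring
  simp_rw [h]
  rw [MeasureTheory.integral_const_mul,
    integral_sub_right_eq_self (fun u : ℝ => (1 + (u / y) ^ 2)⁻¹) ω₀,
    MeasureTheory.Measure.integral_comp_div (fun u : ℝ => (1 + u ^ 2)⁻¹) y,
    integral_univ_inv_one_add_sq, abs_of_pos hy, smul_eq_mul]
  field_simp

lemma sp_integrand_integrable (f : ℝ → ℂ) (hf : Integrable f) {lam : ℂ} (h : lam.im ≠ 0) :
    Integrable (fun x : ℝ => f x / ((x : ℂ) - lam)) := by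
  have h2 : (0:ℝ) < |lam.im| := abs_pos.mpr h
  refine (hf.norm.mul_const |lam.im|⁻¹).mono' ?_ ?_
  · have hm : AEStronglyMeasurable (fun x : ℝ => ((x:ℂ) - lam)⁻¹) volume :=
      ((Complex.measurable_ofReal.sub measurable_const).inv).aestronglyMeasurable
    simpa [div_eq_mul_inv, Pi.mul_def] using hf.aestronglyMeasurable.mul hm
  · filter_upwards with x
    rw [norm_div]
    have h1 : |lam.im| ≤ ‖(x : ℂ) - lam‖ := by
      have := Complex.abs_im_le_norm ((x : ℂ) - lam)
      simpa using this
    rw [div_eq_mul_inv]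
    gcongr

lemma sp_diff (f : ℝ → ℂ) (hf : Integrable f) (ω₀ : ℝ) {y : ℝ} (hy : 0 < y) :
    sokhotskyiPlemelj f ((ω₀ : ℂ) + y * Complex.I)
      - sokhotskyiPlemelj f ((ω₀ : ℂ) - y * Complex.I)
      = (π : ℂ)⁻¹ * ∫ x : ℝ, f x * ((y / ((x - ω₀) ^ 2 + y ^ 2) : ℝ) : ℂ) := by
  have himp : ((ω₀ : ℂ) + y * Complex.I).im ≠ 0 := by simpa using hy.ne'
  have himm : ((ω₀ : ℂ) - y * Complex.I).im ≠ 0 := by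
    simpa using (neg_ne_zero.mpr hy.ne')
  have hplus := sp_integrand_integrable f hf himp
  have hminus := sp_integrand_integrable f hf himm
  unfold sokhotskyiPlemelj
  rw [← mul_sub, ← integral_sub hplus hminus, ← MeasureTheory.integral_const_mul,
    ← MeasureTheory.integral_const_mul]
  refine integral_congr_ae (Eventually.of_forall fun x => ?_)
  have hDpos : (0:ℝ) < (x - ω₀) ^ 2 + y ^ 2 := by positivity
  have hD : ((x:ℂ) - ((ω₀ : ℂ) + y * Complex.I)) * ((x:ℂ) - ((ω₀ : ℂ) - y * Complex.I))
      = (((x - ω₀) ^ 2 + y ^ 2 : ℝ) : ℂ) := by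
    rw [show ((x:ℂ) - ((ω₀ : ℂ) + y * Complex.I)) * ((x:ℂ) - ((ω₀ : ℂ) - y * Complex.I))
        = ((x:ℂ) - ω₀) ^ 2 - (y:ℂ) ^ 2 * Complex.I ^ 2 from by ring, Complex.I_sq]
    push_cast
    ring
  have ha : ((x:ℂ) - ((ω₀ : ℂ) + y * Complex.I)) ≠ 0 := by
    intro h0
    apply himp
    have := congrArg Complex.im h0
    simpa using this
  have hb : ((x:ℂ) - ((ω₀ : ℂ) - y * Complex.I)) ≠ 0 := by
    intro h0
    apply himm
    have := congrArg Complex.im h0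
    simpa using this
  have hDC : (((x - ω₀) ^ 2 + y ^ 2 : ℝ) : ℂ) ≠ 0 := Complex.ofReal_ne_zero.mpr hDpos.ne'
  have step : f x / ((x:ℂ) - ((ω₀ : ℂ) + y * Complex.I))
      - f x / ((x:ℂ) - ((ω₀ : ℂ) - y * Complex.I))
      = f x * (2 * (y:ℂ) * Complex.I) /
        (((x:ℂ) - ((ω₀ : ℂ) + y * Complex.I)) * ((x:ℂ) - ((ω₀ : ℂ) - y * Complex.I))) := by
    field_simp
    ring
  simp only []
  rw [step, hD]
  have hπ : ((π:ℝ) : ℂ) ≠ 0 := Complex.ofReal_ne_zero.mpr Real.pi_ne_zero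
  rw [Complex.ofReal_div]
  generalize hAx : (((x - ω₀) ^ 2 + y ^ 2 : ℝ) : ℂ) = A at hDC ⊢
  field_simp [hπ, hDC, Complex.I_ne_zero]

/-- Multiplicative Riemann–Hilbert factorization via Sokhotskyi–Plemelj
integrals: if `f` is integrable and Hölder at `ω₀`, and
`Φ⁺(λ) = exp(φ_f(λ))`, `Φ⁻(λ) = exp(−φ_f(λ))`, then
`lim_{y→0⁺} Φ⁺(ω₀ + iy) · Φ⁻(ω₀ − iy) = e^{f(ω₀)}`. -/
theorem sokhotskyiPlemelj_riemannHilbert_factorization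
    (f : ℝ → ℂ) (hf : Integrable f) (ω₀ : ℝ)
    (C γ : ℝ) (hC : 0 < C) (hγ : γ ∈ Set.Ioc (0 : ℝ) 1)
    (hHolder : ∀ x : ℝ, |x - ω₀| ≤ 1 → ‖f x - f ω₀‖ ≤ C * |x - ω₀| ^ γ) :
    Tendsto (fun y : ℝ =>
        Complex.exp (sokhotskyiPlemelj f ((ω₀ : ℂ) + y * Complex.I)) *
          Complex.exp (-sokhotskyiPlemelj f ((ω₀ : ℂ) - y * Complex.I)))
      (𝓝[>] 0) (𝓝 (Complex.exp (f ω₀))) := by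
  obtain ⟨hγ0, hγ1⟩ := hγ
  -- the error integrand
  set F : ℝ → ℝ → ℂ :=
    fun y x => (f x - f ω₀) * ((y / ((x - ω₀) ^ 2 + y ^ 2) : ℝ) : ℂ) with hFdef
  -- the dominating function
  set G : ℝ → ℝ := fun x =>
    (if |x - ω₀| ≤ 1 then C / 2 * |x - ω₀| ^ (γ - 1) else 0)
      + (‖f x‖ + 2 * ‖f ω₀‖ * (1 + (x - ω₀) ^ 2)⁻¹) with hGdef
  -- integrability of the dominating function
  have hnear : Integrable
      (fun x : ℝ => if |x - ω₀| ≤ 1 then C / 2 * |x - ω₀| ^ (γ - 1) else 0) := by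
    have hr : (-1 : ℝ) < γ - 1 := by linarith
    have h2 : IntegrableOn (fun u : ℝ => u ^ (γ - 1)) (Set.Ioc (0:ℝ) 1) := by
      have := intervalIntegral.intervalIntegrable_rpow' (a := 0) (b := 1) hr
      rwa [intervalIntegrable_iff_integrableOn_Ioc_of_le zero_le_one] at this
    have h3 : IntegrableOn (fun u : ℝ => u ^ (γ - 1)) (Set.Icc (0:ℝ) 1) :=
      h2.congr_set_ae Ioc_ae_eq_Icc.symm
    have h1 : IntegrableOn (fun u : ℝ => C / 2 * |u| ^ (γ - 1)) (Set.Icc (0:ℝ) 1) :=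
      (h3.congr_fun (fun u hu => by rw [_root_.abs_of_nonneg hu.1]) measurableSet_Icc).const_mul _
    have K : Integrable
        (Set.indicator (Set.Icc (0:ℝ) 1) (fun u => C / 2 * |u| ^ (γ - 1))) :=
      (integrable_indicator_iff measurableSet_Icc).2 h1
    have K' : Integrable
        (Set.indicator (Set.Icc (-1:ℝ) 0) (fun u => C / 2 * |u| ^ (γ - 1))) := by
      refine K.comp_neg.congr (Eventually.of_forall fun u => ?_)
      beta_reduce
      rw [Set.indicator_apply, Set.indicator_apply, abs_neg]
      refine if_congr ?_ rfl rfl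
      simp only [Set.mem_Icc]
      constructor <;> intro h <;> constructor <;> linarith [h.1, h.2]
    have hIcc : IntegrableOn (fun u : ℝ => C / 2 * |u| ^ (γ - 1)) (Set.Icc (-1:ℝ) 1) := by
      rw [← Set.Icc_union_Icc_eq_Icc (by norm_num : (-1:ℝ) ≤ 0) (by norm_num : (0:ℝ) ≤ 1)]
      exact ((integrable_indicator_iff measurableSet_Icc).1 K').union
        ((integrable_indicator_iff measurableSet_Icc).1 K)
    have hind : Integrable
        (Set.indicator (Set.Icc (-1:ℝ) 1) (fun u => C / 2 * |u| ^ (γ - 1))) :=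
      (integrable_indicator_iff measurableSet_Icc).2 hIcc
    refine (hind.comp_sub_right ω₀).congr (Eventually.of_forall fun x => ?_)
    beta_reduce
    rw [Set.indicator_apply]
    by_cases h : |x - ω₀| ≤ 1
    · rw [if_pos (by simpa [Set.mem_Icc] using abs_le.mp h), if_pos h]
    · have hmem : x - ω₀ ∉ Set.Icc (-1:ℝ) 1 := by
        rw [Set.mem_Icc, ← abs_le]; exact h
      rw [if_neg hmem, if_neg h]
  have hfar : Integrable
      (fun x : ℝ => ‖f x‖ + 2 * ‖f ω₀‖ * (1 + (x - ω₀) ^ 2)⁻¹) :=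
    hf.norm.add ((integrable_inv_one_add_sq.comp_sub_right ω₀).const_mul _)
  have hG_int : Integrable G := hnear.add hfar
  -- a.e. statements
  have hae : ∀ᵐ x : ℝ, x ≠ ω₀ := by
    have : {x : ℝ | ¬ x ≠ ω₀} = {ω₀} := by ext u; simp
    rw [ae_iff, this]
    exact measure_singleton ω₀
  -- the dominated convergence step
  have hE : Tendsto (fun y : ℝ => ∫ x : ℝ, F y x) (𝓝[>] (0:ℝ)) (𝓝 0) := by
    have h0 : (𝓝 (0:ℂ)) = 𝓝 (∫ _ : ℝ, (0:ℂ)) := by simp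
    rw [h0]
    refine tendsto_integral_filter_of_dominated_convergence G ?_ ?_ hG_int ?_
    · filter_upwards [self_mem_nhdsWithin] with y hy
      have hy' : 0 < y := hy
      have hcont : Continuous fun x : ℝ => ((y / ((x - ω₀) ^ 2 + y ^ 2) : ℝ) : ℂ) := by
        refine Complex.continuous_ofReal.comp (continuous_const.div (by fun_prop) ?_)
        intro x
        positivity
      exact (hf.aestronglyMeasurable.sub aestronglyMeasurable_const).mul
        hcont.aestronglyMeasurable
    · filter_upwards [Ioc_mem_nhdsGT_of_mem (Set.left_mem_Ico.mpr zero_lt_one)] with y hy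
      obtain ⟨hy0, hy1⟩ := hy
      filter_upwards [hae] with x hx
      have hr : 0 < |x - ω₀| := abs_pos.mpr (sub_ne_zero.mpr hx)
      have hd : (0:ℝ) < (x - ω₀) ^ 2 + y ^ 2 := by positivity
      have hPnn : (0:ℝ) ≤ y / ((x - ω₀) ^ 2 + y ^ 2) := by positivity
      rw [hFdef]
      simp only [norm_mul, Complex.norm_real, Real.norm_eq_abs, _root_.abs_of_nonneg hPnn]
      rw [hGdef]
      beta_reduce
      by_cases h1 : |x - ω₀| ≤ 1
      · rw [if_pos h1]
        have hP_le : y / ((x - ω₀) ^ 2 + y ^ 2) ≤ 1 / (2 * |x - ω₀|) := by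
          rw [div_le_div_iff₀ hd (by positivity)]
          nlinarith [sq_nonneg (|x - ω₀| - y), _root_.sq_abs (x - ω₀)]
        have step : ‖f x - f ω₀‖ * (y / ((x - ω₀) ^ 2 + y ^ 2))
            ≤ (C * |x - ω₀| ^ γ) * (1 / (2 * |x - ω₀|)) :=
          mul_le_mul (hHolder x h1) hP_le hPnn (by positivity)
        have heq : (C * |x - ω₀| ^ γ) * (1 / (2 * |x - ω₀|))
            = C / 2 * |x - ω₀| ^ (γ - 1) := by
          rw [Real.rpow_sub hr, Real.rpow_one]
          field_simp
        have hnn2 : (0:ℝ) ≤ ‖f x‖ + 2 * ‖f ω₀‖ * (1 + (x - ω₀) ^ 2)⁻¹ := by positivity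
        calc ‖f x - f ω₀‖ * (y / ((x - ω₀) ^ 2 + y ^ 2))
            ≤ C / 2 * |x - ω₀| ^ (γ - 1) := heq ▸ step
          _ ≤ _ := by linarith
      · rw [if_neg h1]
        push_neg at h1
        have hs : (1:ℝ) < (x - ω₀) ^ 2 := by nlinarith [_root_.sq_abs (x - ω₀)]
        have hP1 : y / ((x - ω₀) ^ 2 + y ^ 2) ≤ 1 := by
          rw [div_le_one hd]
          nlinarith
        have hP2 : y / ((x - ω₀) ^ 2 + y ^ 2) ≤ 2 * (1 + (x - ω₀) ^ 2)⁻¹ := by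
          rw [← div_eq_mul_inv, div_le_div_iff₀ hd (by positivity)]
          nlinarith
        have t1 := mul_le_mul_of_nonneg_right (norm_sub_le (f x) (f ω₀)) hPnn
        have t2 := mul_le_mul_of_nonneg_left hP1 (norm_nonneg (f x))
        have t3 := mul_le_mul_of_nonneg_left hP2 (norm_nonneg (f ω₀))
        nlinarith [norm_nonneg (f x), norm_nonneg (f ω₀)]
    · filter_upwards [hae] with x hx
      have hd0 : ((x - ω₀) ^ 2 + (0:ℝ) ^ 2) ≠ 0 := by
        simpa using pow_ne_zero 2 (sub_ne_zero.mpr hx)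
      have hcont : Continuous fun y : ℝ => (x - ω₀) ^ 2 + y ^ 2 := by fun_prop
      have hx2 : (0:ℝ) < (x - ω₀) ^ 2 :=
        lt_of_le_of_ne (sq_nonneg _) (Ne.symm (pow_ne_zero 2 (sub_ne_zero.mpr hx)))
      have hP : Tendsto (fun y : ℝ => y / ((x - ω₀) ^ 2 + y ^ 2)) (𝓝 0) (𝓝 0) := by
        have hc2 : Continuous fun y : ℝ => y / ((x - ω₀) ^ 2 + y ^ 2) :=
          continuous_id.div hcont (fun y => by nlinarith [sq_nonneg y])
        have := hc2.tendsto 0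
        simpa using this
      have hPC : Tendsto (fun y : ℝ => ((y / ((x - ω₀) ^ 2 + y ^ 2) : ℝ) : ℂ)) (𝓝 0) (𝓝 0) := by
        have := (Complex.continuous_ofReal.tendsto 0).comp hP
        simpa only [Function.comp_def, Complex.ofReal_zero] using this
      have := hPC.const_mul (f x - f ω₀)
      rw [mul_zero] at this
      exact (this.mono_left nhdsWithin_le_nhds)
  -- assembling
  have hmain : Tendsto (fun y : ℝ =>
      sokhotskyiPlemelj f ((ω₀ : ℂ) + y * Complex.I)
        - sokhotskyiPlemelj f ((ω₀ : ℂ) - y * Complex.I)) (𝓝[>] (0:ℝ)) (𝓝 (f ω₀)) := by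
    have h2 : Tendsto (fun y : ℝ => f ω₀ + (π:ℂ)⁻¹ * ∫ x : ℝ, F y x)
        (𝓝[>] (0:ℝ)) (𝓝 (f ω₀)) := by
      have := (hE.const_mul ((π:ℂ)⁻¹)).const_add (f ω₀)
      simpa using this
    refine Tendsto.congr' ?_ h2
    filter_upwards [self_mem_nhdsWithin] with y hy
    have hy' : (0:ℝ) < y := hy
    rw [sp_diff f hf ω₀ hy']
    have hP_int : Integrable (fun x : ℝ => ((y / ((x - ω₀) ^ 2 + y ^ 2) : ℝ) : ℂ)) :=
      (poisson_integrable hy' ω₀).ofReal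
    have hfP : Integrable (fun x : ℝ => f x * ((y / ((x - ω₀) ^ 2 + y ^ 2) : ℝ) : ℂ)) := by
      have hbdd : ∀ x : ℝ, ‖((y / ((x - ω₀) ^ 2 + y ^ 2) : ℝ) : ℂ)‖ ≤ y⁻¹ := by
        intro x
        have hd : (0:ℝ) < (x - ω₀) ^ 2 + y ^ 2 := by positivity
        rw [Complex.norm_real, Real.norm_eq_abs, _root_.abs_of_nonneg (by positivity)]
        calc y / ((x - ω₀) ^ 2 + y ^ 2) ≤ y / y ^ 2 := by
              gcongr <;> nlinarith [sq_nonneg (x - ω₀), hy']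
          _ = y⁻¹ := by
              rw [sq]
              field_simp
      have hPcont : Continuous fun x : ℝ => ((y / ((x - ω₀) ^ 2 + y ^ 2) : ℝ) : ℂ) :=
        Complex.continuous_ofReal.comp
          (continuous_const.div (by fun_prop) (fun x => by positivity))
      have := hf.bdd_mul hPcont.aestronglyMeasurable (Eventually.of_forall hbdd)
      simpa [mul_comm] using this
    have hF_int : Integrable (F y) := by
      rw [hFdef]
      simp only [sub_mul]
      exact hfP.sub (hP_int.const_mul _)
    have key : (∫ x : ℝ, f x * ((y / ((x - ω₀) ^ 2 + y ^ 2) : ℝ) : ℂ))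
        = (∫ x : ℝ, F y x) + f ω₀ * (π : ℂ) := by
      have hsplit : ∀ x : ℝ, f x * ((y / ((x - ω₀) ^ 2 + y ^ 2) : ℝ) : ℂ)
          = F y x + f ω₀ * ((y / ((x - ω₀) ^ 2 + y ^ 2) : ℝ) : ℂ) := by
        intro x
        rw [hFdef]
        ring
      have hcoe : (∫ x : ℝ, ((y / ((x - ω₀) ^ 2 + y ^ 2) : ℝ) : ℂ))
          = (((∫ x : ℝ, y / ((x - ω₀) ^ 2 + y ^ 2)) : ℝ) : ℂ) := integral_ofReal
      rw [integral_congr_ae (Eventually.of_forall hsplit),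
        integral_add hF_int (hP_int.const_mul _), MeasureTheory.integral_const_mul,
        hcoe, poisson_integral hy' ω₀]
    rw [key]
    have hπ : ((π:ℝ) : ℂ) ≠ 0 := Complex.ofReal_ne_zero.mpr Real.pi_ne_zero
    field_simp
    ring
  have hfinal := (Complex.continuous_exp.tendsto (f ω₀)).comp hmain
  refine hfinal.congr fun y => ?_
  simp only [Function.comp_apply, sub_eq_add_neg, Complex.exp_add]
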